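/- Let X and Y be measurable spaces, let μ and ν be probability measures on X, and let κ, κ' be Markov kernels from X to Y. Suppose ε₁, ε₂ ≥ 0 are such that μ(A) ≤ exp(ε₁)·ν(A) for every measurable A ⊆ X, and for every x ∈ X, κ(x)(B) ≤ exp(ε₂)·κ'(x)(B) for every measurable B ⊆ Y. Then for every measurable set C ⊆ X × Y, the composed measures satisfy (μ ⊗ κ)(C) ≤ exp(ε₁ + ε₂)·(ν ⊗ κ')(C). -/

import Mathlib

open MeasureTheory ProbabilityTheory Real

/-- Adaptive basic composition: if `μ(A) ≤ e^{ε₁} ν(A)` for all measurable `A` and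
`κ(x)(B) ≤ e^{ε₂} κ'(x)(B)` for all `x` and measurable `B`, then the composition-product
measures satisfy `(μ ⊗ κ)(C) ≤ e^{ε₁+ε₂} (ν ⊗ κ')(C)` for all measurable `C`. -/
theorem adaptive_composition_dp
    {X Y : Type*} [MeasurableSpace X] [MeasurableSpace Y]
    (μ ν : Measure X) [IsProbabilityMeasure μ] [IsProbabilityMeasure ν]
    (κ κ' : Kernel X Y) [IsMarkovKernel κ] [IsMarkovKernel κ']
    (ε₁ ε₂ : ℝ) (hε₁ : 0 ≤ ε₁) (hε₂ : 0 ≤ ε₂)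
    (hμν : ∀ A : Set X, MeasurableSet A → μ A ≤ ENNReal.ofReal (Real.exp ε₁) * ν A)
    (hκ : ∀ x : X, ∀ B : Set Y, MeasurableSet B →
      κ x B ≤ ENNReal.ofReal (Real.exp ε₂) * κ' x B)
    (C : Set (X × Y)) (hC : MeasurableSet C) :
    (μ ⊗ₘ κ) C ≤ ENNReal.ofReal (Real.exp (ε₁ + ε₂)) * (ν ⊗ₘ κ') C := by
  have hμle : μ ≤ ENNReal.ofReal (Real.exp ε₁) • ν := by
    rw [Measure.le_iff]
    intro A hA
    simpa using hμν A hA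
  rw [Measure.compProd_apply hC, Measure.compProd_apply hC]
  calc ∫⁻ x, κ x (Prod.mk x ⁻¹' C) ∂μ
      ≤ ∫⁻ x, ENNReal.ofReal (Real.exp ε₂) * κ' x (Prod.mk x ⁻¹' C) ∂μ := by
        refine lintegral_mono fun x => hκ x _ (measurable_prodMk_left hC)
    _ = ENNReal.ofReal (Real.exp ε₂) * ∫⁻ x, κ' x (Prod.mk x ⁻¹' C) ∂μ := by
        rw [lintegral_const_mul _ (Kernel.measurable_kernel_prodMk_left hC)]
    _ ≤ ENNReal.ofReal (Real.exp ε₂) *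
        ∫⁻ x, κ' x (Prod.mk x ⁻¹' C) ∂(ENNReal.ofReal (Real.exp ε₁) • ν) := by
        exact mul_le_mul_right (lintegral_mono' hμle le_rfl) _
    _ = ENNReal.ofReal (Real.exp (ε₁ + ε₂)) * ∫⁻ x, κ' x (Prod.mk x ⁻¹' C) ∂ν := by
        rw [lintegral_smul_measure, smul_eq_mul, Real.exp_add,
          ENNReal.ofReal_mul (Real.exp_pos ε₁).le, ← mul_assoc]
        ring
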